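/- Let G be a connected d-regular graph on n vertices, let Ĝ = K_1 + G be its cone with apex c, and let H be the graph obtained from Ĝ by attaching a one-way infinite path to c. Then for all vertices u, v of G and all real t, |⟨e_v, e^{−itA(H)} e_u⟩ − ⟨e_v, e^{−itA(G)} e_u⟩| ≤ 2/n. -/

import Mathlib

noncomputable section

open Matrix

/-- Vertices of the cone `Ĝ = K_1 + G` with a one-way infinite path attached at the apex:
`Sum.inl a` is the vertex `a` of `G`, `Sum.inr 0` is the apex `c`, and `Sum.inr (j+1)` is
the tail vertex `q_{j+1}`. -/
abbrev ConeTailV (n : ℕ) := Fin n ⊕ ℕ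

/-- Adjacency in `H`: the edges of `G`, the edges from the apex `c` to all of `V(G)`,
and the path edges `c q_1, q_1 q_2, q_2 q_3, …`. -/
def coneTailAdj (n : ℕ) (G : SimpleGraph (Fin n)) (x y : ConeTailV n) : Prop :=
  (∃ a b : Fin n, G.Adj a b ∧ x = Sum.inl a ∧ y = Sum.inl b) ∨
  (∃ a : Fin n, (x = Sum.inl a ∧ y = Sum.inr 0) ∨ (y = Sum.inl a ∧ x = Sum.inr 0)) ∨
  (∃ j : ℕ, (x = Sum.inr j ∧ y = Sum.inr (j + 1)) ∨ (y = Sum.inr j ∧ x = Sum.inr (j + 1)))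

/-- The Hilbert space `ℓ²(V(H))`. -/
abbrev coneTailSpace (n : ℕ) := lp (fun _ : ConeTailV n => ℂ) 2

/-- The standard orthonormal basis vector `e_w` of `ℓ²(V(H))`. -/
def stdVec {n : ℕ} (w : ConeTailV n) : coneTailSpace n := lp.single 2 w 1

open scoped Classical

set_option synthInstance.maxHeartbeats 1000000
set_option maxHeartbeats 1000000

section Helpers
variable {n d : ℕ} (G : SimpleGraph (Fin n)) [DecidableRel G.Adj]

lemma inner_stdVec (z : ConeTailV n) (f : coneTailSpace n) :
    (inner ℂ (stdVec z) f : ℂ) = f z := by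
  rw [stdVec, lp.inner_single_left]; simp [RCLike.inner_apply]

omit [DecidableRel G.Adj] in
lemma adj_inl_inl (b a : Fin n) : coneTailAdj n G (Sum.inl b) (Sum.inl a) ↔ G.Adj b a := by
  simp [coneTailAdj]
omit [DecidableRel G.Adj] in
lemma adj_inr0_inl (a : Fin n) : coneTailAdj n G (Sum.inr 0) (Sum.inl a) := by
  simp [coneTailAdj]
omit [DecidableRel G.Adj] in
lemma adj_inrsucc_inl (j : ℕ) (a : Fin n) : ¬ coneTailAdj n G (Sum.inr (j+1)) (Sum.inl a) := by
  simp [coneTailAdj]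

def Jlin (n : ℕ) : EuclideanSpace ℂ (Fin n) →ₗ[ℂ] coneTailSpace n where
  toFun x := ∑ a, x a • stdVec (Sum.inl a)
  map_add' x y := by simp [add_smul, Finset.sum_add_distrib]
  map_smul' c x := by simp [smul_smul, Finset.smul_sum]

def Jmap (n : ℕ) : EuclideanSpace ℂ (Fin n) →L[ℂ] coneTailSpace n :=
  LinearMap.toContinuousLinearMap (Jlin n)

lemma Jmap_eq_sum (x : EuclideanSpace ℂ (Fin n)) :
    Jmap n x = ∑ a, x a • stdVec (Sum.inl a) := rfl

lemma J_apply_inl (x : EuclideanSpace ℂ (Fin n)) (b : Fin n) :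
    (Jmap n x : ∀ _ : ConeTailV n, ℂ) (Sum.inl b) = x b := by
  show ((∑ a, x a • stdVec (Sum.inl a) : coneTailSpace n) : ∀ _ : ConeTailV n, ℂ) (Sum.inl b) = x b
  rw [lp.coeFn_sum]; simp [stdVec, lp.coeFn_smul, lp.single_apply, Pi.single_apply]

lemma J_apply_inr (x : EuclideanSpace ℂ (Fin n)) (j : ℕ) :
    (Jmap n x : ∀ _ : ConeTailV n, ℂ) (Sum.inr j) = 0 := by
  show ((∑ a, x a • stdVec (Sum.inl a) : coneTailSpace n) : ∀ _ : ConeTailV n, ℂ) (Sum.inr j) = 0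
  rw [lp.coeFn_sum]; simp [stdVec, lp.coeFn_smul, lp.single_apply]

lemma inner_J_J (x y : EuclideanSpace ℂ (Fin n)) :
    (inner ℂ (Jmap n x) (Jmap n y) : ℂ) = inner ℂ x y := by
  rw [Jmap_eq_sum, sum_inner]
  simp only [inner_smul_left, inner_stdVec, J_apply_inl]
  rw [PiLp.inner_apply]
  simp [RCLike.inner_apply, mul_comm]

lemma stdVec_inl (a : Fin n) :
    stdVec (Sum.inl a : ConeTailV n) = Jmap n (EuclideanSpace.single a 1) := by
  rw [Jmap_eq_sum, Fintype.sum_eq_single a]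
  · simp [EuclideanSpace.single_apply]
  · intro b hb; simp [EuclideanSpace.single_apply, hb]

def Mclm : EuclideanSpace ℂ (Fin n) →L[ℂ] EuclideanSpace ℂ (Fin n) :=
  Matrix.toEuclideanCLM (𝕜 := ℂ) (G.adjMatrix ℂ)

lemma Mclm_apply (x : EuclideanSpace ℂ (Fin n)) (b : Fin n) :
    (Mclm G x) b = ∑ a, (if G.Adj b a then (1:ℂ) else 0) * x a := by
  have h2 : (Matrix.toEuclideanCLM (𝕜 := ℂ) (G.adjMatrix ℂ) x) b
      = Matrix.toLin' (G.adjMatrix ℂ) (WithLp.equiv _ _ x) b :=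
    congrFun (Matrix.ofLp_toEuclideanCLM (𝕜 := ℂ) (G.adjMatrix ℂ) x) b
  rw [Mclm, h2]
  simp [Matrix.toLin'_apply, Matrix.mulVec, dotProduct, SimpleGraph.adjMatrix_apply]

lemma sum_Mclm (hreg : G.IsRegularOfDegree d) (w : EuclideanSpace ℂ (Fin n)) :
    ∑ b, (Mclm G w) b = (d : ℂ) * ∑ a, w a := by
  simp only [Mclm_apply]
  rw [Finset.sum_comm, Finset.mul_sum]
  refine Finset.sum_congr rfl fun a _ => ?_
  have : ∀ b, (if G.Adj b a then (1:ℂ) else 0) = (if G.Adj a b then (1:ℂ) else 0) := by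
    intro b; simp [SimpleGraph.adj_comm]
  simp_rw [this, ← Finset.sum_mul]
  congr 1
  rw [Finset.sum_boole]
  have : (Finset.univ.filter (fun b => G.Adj a b)) = G.neighborFinset a := by
    ext b; simp [SimpleGraph.mem_neighborFinset]
  rw [this]
  have := hreg a
  rw [SimpleGraph.degree] at this
  rw [this]

variable (A : coneTailSpace n →L[ℂ] coneTailSpace n)

lemma A_J (hA : ∀ x y : ConeTailV n, (inner ℂ (stdVec x) (A (stdVec y)) : ℂ)
      = if coneTailAdj n G x y then 1 else 0)
    (w : EuclideanSpace ℂ (Fin n)) (hw : ∑ a, w a = 0) :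
    A (Jmap n w) = Jmap n (Mclm G w) := by
  apply lp.ext
  funext z
  rw [← inner_stdVec z (A (Jmap n w)), ← inner_stdVec z (Jmap n (Mclm G w))]
  have expand : (inner ℂ (stdVec z) (A (Jmap n w)) : ℂ)
      = ∑ a, w a * (if coneTailAdj n G z (Sum.inl a) then 1 else 0) := by
    rw [Jmap_eq_sum, map_sum]
    rw [inner_sum]
    refine Finset.sum_congr rfl fun a _ => ?_
    rw [(A).map_smul, inner_smul_right, hA]
  rw [expand]
  rcases z with b | j
  · rw [inner_stdVec, J_apply_inl, Mclm_apply]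
    refine Finset.sum_congr rfl fun a _ => ?_
    rw [adj_inl_inl]
    simp [mul_comm]
  · rw [inner_stdVec, J_apply_inr]
    cases j with
    | zero => simpa [adj_inr0_inl] using hw
    | succ j => simp [adj_inrsucc_inl]

lemma pow_transfer (hA : ∀ x y : ConeTailV n, (inner ℂ (stdVec x) (A (stdVec y)) : ℂ)
      = if coneTailAdj n G x y then 1 else 0)
    (hreg : G.IsRegularOfDegree d)
    (w : EuclideanSpace ℂ (Fin n)) (hw : ∑ a, w a = 0) (k : ℕ) :
    (A ^ k) (Jmap n w) = Jmap n ((Mclm G ^ k) w) ∧ ∑ a, ((Mclm G ^ k) w) a = 0 := by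
  induction k with
  | zero => simp [hw]
  | succ k ih =>
    have h1 : (A ^ (k+1)) (Jmap n w) = A ((A ^ k) (Jmap n w)) := by
      rw [pow_succ']; rfl
    have h2 : ((Mclm G ^ (k+1)) w) = Mclm G ((Mclm G ^ k) w) := by
      rw [pow_succ']; rfl
    constructor
    · rw [h1, ih.1, A_J G A hA _ ih.2, h2]
    · rw [h2, sum_Mclm G hreg, ih.2, mul_zero]

lemma exp_apply_eq_tsum {V : Type*} [NormedAddCommGroup V] [NormedSpace ℂ V] [CompleteSpace V]
    (B : V →L[ℂ] V) (x : V) :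
    NormedSpace.exp B x = ∑' k : ℕ, (k.factorial : ℂ)⁻¹ • ((B ^ k) x) := by
  have hs : Summable fun k : ℕ => (k.factorial : ℂ)⁻¹ • B ^ k :=
    NormedSpace.expSeries_summable' (𝕂 := ℂ) B
  have := (ContinuousLinearMap.apply ℂ V x).map_tsum hs
  rw [NormedSpace.exp_eq_tsum ℂ]
  simpa using this

lemma exp_transfer (hA : ∀ x y : ConeTailV n, (inner ℂ (stdVec x) (A (stdVec y)) : ℂ)
      = if coneTailAdj n G x y then 1 else 0)
    (hreg : G.IsRegularOfDegree d) (c : ℂ)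
    (w : EuclideanSpace ℂ (Fin n)) (hw : ∑ a, w a = 0) :
    NormedSpace.exp (c • A) (Jmap n w) = Jmap n (NormedSpace.exp (c • Mclm G) w) := by
  rw [exp_apply_eq_tsum, exp_apply_eq_tsum]
  have key : ∀ k : ℕ, ((c • A) ^ k) (Jmap n w) = Jmap n (((c • Mclm G) ^ k) w) := by
    intro k
    rw [smul_pow, smul_pow]
    rw [ContinuousLinearMap.smul_apply, ContinuousLinearMap.smul_apply]
    rw [(pow_transfer G A hA hreg w hw k).1, (Jmap n).map_smul]
  have hsum : Summable fun k : ℕ => (k.factorial : ℂ)⁻¹ • (((c • Mclm G) ^ k) w) := by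
    have hs : Summable fun k : ℕ => (k.factorial : ℂ)⁻¹ • (c • Mclm G) ^ k :=
      NormedSpace.expSeries_summable' (𝕂 := ℂ) _
    have := hs.map (ContinuousLinearMap.apply ℂ (EuclideanSpace ℂ (Fin n)) w)
      (ContinuousLinearMap.apply ℂ (EuclideanSpace ℂ (Fin n)) w).continuous
    exact this
  rw [(Jmap n).map_tsum hsum]
  refine tsum_congr fun k => ?_
  rw [key, (Jmap n).map_smul]

lemma summable_aux {V : Type*} [NormedAddCommGroup V] [NormedSpace ℂ V] [CompleteSpace V]
    (B : V →L[ℂ] V) (x : V) :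
    Summable fun k : ℕ => (k.factorial : ℂ)⁻¹ • ((B ^ k) x) := by
  have hs : Summable fun k : ℕ => (k.factorial : ℂ)⁻¹ • B ^ k :=
    NormedSpace.expSeries_summable' (𝕂 := ℂ) B
  exact hs.map (ContinuousLinearMap.apply ℂ V x)
    (ContinuousLinearMap.apply ℂ V x).continuous

def oneVec (n : ℕ) : EuclideanSpace ℂ (Fin n) := (WithLp.equiv 2 _).symm (fun _ => 1)

lemma oneVec_apply (a : Fin n) : oneVec n a = 1 := rfl

lemma Mclm_one (hreg : G.IsRegularOfDegree d) :
    Mclm G (oneVec n) = (d : ℂ) • oneVec n := by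
  refine PiLp.ext fun a => ?_
  rw [Mclm_apply]
  simp only [oneVec_apply, mul_one, PiLp.smul_apply, smul_eq_mul]
  rw [Finset.sum_boole]
  have h1 : (Finset.univ.filter (fun b => G.Adj a b)) = G.neighborFinset a := by
    ext b; simp [SimpleGraph.mem_neighborFinset]
  rw [h1]
  have h2 := hreg a
  rw [SimpleGraph.degree] at h2
  rw [h2]

lemma exp_smul_one (hreg : G.IsRegularOfDegree d) (c : ℂ) :
    NormedSpace.exp (c • Mclm G) (oneVec n) = Complex.exp (c * d) • oneVec n := by
  have key : ∀ k : ℕ, ((c • Mclm G) ^ k) (oneVec n) = (c * d) ^ k • oneVec n := by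
    intro k
    induction k with
    | zero => simp
    | succ k ih =>
      have h1 : ((c • Mclm G) ^ (k+1)) (oneVec n) = (c • Mclm G) (((c • Mclm G) ^ k) (oneVec n)) := by
        rw [pow_succ']; rfl
      rw [h1, ih, (c • Mclm G).map_smul, ContinuousLinearMap.smul_apply, Mclm_one G hreg,
        smul_smul, smul_smul]
      congr 1
      ring
  rw [exp_apply_eq_tsum]
  simp_rw [key, smul_smul]
  have hsum : Summable fun k : ℕ => (k.factorial : ℂ)⁻¹ * (c * d) ^ k := by
    have := NormedSpace.expSeries_summable' (𝕂 := ℂ) (c * (d:ℂ))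
    simpa [smul_eq_mul] using this
  rw [hsum.tsum_smul_const]
  congr 1
  rw [Complex.exp_eq_exp_ℂ, NormedSpace.exp_eq_tsum ℂ]
  simp [smul_eq_mul]

lemma sum_pow_Mclm (hreg : G.IsRegularOfDegree d)
    (w : EuclideanSpace ℂ (Fin n)) (hw : ∑ a, w a = 0) (k : ℕ) :
    ∑ a, (((Mclm G) ^ k) w) a = 0 := by
  induction k with
  | zero => simpa using hw
  | succ k ih =>
    have h2 : ((Mclm G ^ (k+1)) w) = Mclm G ((Mclm G ^ k) w) := by rw [pow_succ']; rfl
    rw [h2, sum_Mclm G hreg, ih, mul_zero]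

lemma sum_exp_zero (hreg : G.IsRegularOfDegree d) (c : ℂ)
    (w : EuclideanSpace ℂ (Fin n)) (hw : ∑ a, w a = 0) :
    ∑ a, (NormedSpace.exp (c • Mclm G) w) a = 0 := by
  let σ : EuclideanSpace ℂ (Fin n) →L[ℂ] ℂ := LinearMap.toContinuousLinearMap
    { toFun := fun x => ∑ a, x a
      map_add' := fun x y => by simp [Finset.sum_add_distrib]
      map_smul' := fun r x => by simp [Finset.mul_sum] }
  have hσ : ∀ x : EuclideanSpace ℂ (Fin n), σ x = ∑ a, x a := fun _ => rfl
  rw [← hσ, exp_apply_eq_tsum, σ.map_tsum (summable_aux _ _)]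
  have hterm : ∀ k : ℕ, σ ((k.factorial : ℂ)⁻¹ • (((c • Mclm G) ^ k) w)) = 0 := by
    intro k
    rw [σ.map_smul, smul_pow, ContinuousLinearMap.smul_apply, σ.map_smul, hσ,
      sum_pow_Mclm G hreg w hw k]
    simp
  simp only [hterm, Function.comp_apply, tsum_zero]

lemma exp_matrix_entry (N : Matrix (Fin n) (Fin n) ℂ) (v u : Fin n) :
    NormedSpace.exp N v u
      = (inner ℂ (EuclideanSpace.single v (1:ℂ))
          (NormedSpace.exp (Matrix.toEuclideanCLM (𝕜 := ℂ) N)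
            (EuclideanSpace.single u (1:ℂ))) : ℂ) := by
  have hcont : Continuous (fun X : Matrix (Fin n) (Fin n) ℂ => Matrix.toEuclideanCLM (𝕜 := ℂ) X) := by
    let L : Matrix (Fin n) (Fin n) ℂ →ₗ[ℂ]
        (EuclideanSpace ℂ (Fin n) →L[ℂ] EuclideanSpace ℂ (Fin n)) :=
      { toFun := fun X => Matrix.toEuclideanCLM (𝕜 := ℂ) X
        map_add' := fun X Y => map_add _ X Y
        map_smul' := fun r X => by
          show Matrix.toEuclideanCLM (𝕜 := ℂ) (r • X) = r • Matrix.toEuclideanCLM (𝕜 := ℂ) X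
          exact _root_.map_smul (Matrix.toEuclideanCLM (𝕜 := ℂ)) r X }
    exact L.continuous_of_finiteDimensional
  letI : SeminormedRing (Matrix (Fin n) (Fin n) ℂ) := Matrix.linftyOpSemiNormedRing
  letI : NormedRing (Matrix (Fin n) (Fin n) ℂ) := Matrix.linftyOpNormedRing
  letI : NormedAlgebra ℂ (Matrix (Fin n) (Fin n) ℂ) := Matrix.linftyOpNormedAlgebra
  letI : NormedAlgebra ℚ (Matrix (Fin n) (Fin n) ℂ) := NormedAlgebra.restrictScalars ℚ ℂ _
  have hmap := NormedSpace.map_exp (Matrix.toEuclideanCLM (𝕜 := ℂ)) hcont N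
  rw [← hmap]
  rw [EuclideanSpace.inner_single_left]
  have h2 : (Matrix.toEuclideanCLM (𝕜 := ℂ) (NormedSpace.exp N) (EuclideanSpace.single u 1)) v
      = Matrix.toLin' (NormedSpace.exp N) (WithLp.equiv _ _ (EuclideanSpace.single u (1:ℂ))) v :=
    congrFun (Matrix.ofLp_toEuclideanCLM (𝕜 := ℂ) _ _) v
  erw [h2]
  rw [show WithLp.equiv 2 _ (EuclideanSpace.single u (1:ℂ)) = Pi.single u 1 from rfl, Matrix.toLin'_apply, Matrix.mulVec_single]
  simp

end Helpers

/-- Let `G` be a connected `d`-regular graph on `n` vertices and let `H` be its cone with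
a one-way infinite path attached at the apex.  Then for all vertices `u, v` of `G` and all
real `t`, `|⟨e_v, e^{-itA(H)} e_u⟩ - ⟨e_v, e^{-itA(G)} e_u⟩| ≤ 2/n`. -/
theorem cone_tail_transfer_bound (n d : ℕ) (G : SimpleGraph (Fin n))
    [DecidableRel G.Adj] (hconn : G.Connected) (hreg : G.IsRegularOfDegree d)
    (A : coneTailSpace n →L[ℂ] coneTailSpace n) (hsa : IsSelfAdjoint A)
    (hA : ∀ x y : ConeTailV n, (inner ℂ (stdVec x) (A (stdVec y)) : ℂ)
      = if coneTailAdj n G x y then 1 else 0)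
    (u v : Fin n) (t : ℝ) :
    ‖
        ((inner ℂ (stdVec (Sum.inl v : ConeTailV n))
            (NormedSpace.exp ((-(t : ℂ) * Complex.I) • A)
              (stdVec (Sum.inl u : ConeTailV n))) : ℂ)
          - NormedSpace.exp ((-(t : ℂ) * Complex.I) • G.adjMatrix ℂ) v u)‖
      ≤ 2 / (n : ℝ) := by
  have hn : 0 < n := Fin.pos u
  have hNn : ((n:ℂ)) ≠ 0 := by exact_mod_cast hn.ne'
  have hNnr : ((n:ℝ)) ≠ 0 := by exact_mod_cast hn.ne'
  set c : ℂ := -(t:ℂ) * Complex.I with hc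
  have hconj : (starRingEnd ℂ) c = -c := by
    rw [hc, RingHom.map_mul, RingHom.map_neg, Complex.conj_ofReal, Complex.conj_I]; ring
  set M := Mclm G with hM
  set T := NormedSpace.exp (c • A) with hT
  set E := NormedSpace.exp (c • M) with hE
  set p : EuclideanSpace ℂ (Fin n) := (n:ℂ)⁻¹ • oneVec n with hp
  set εu := EuclideanSpace.single u (1:ℂ) with hεu
  set εv := EuclideanSpace.single v (1:ℂ) with hεv
  set wu := εu - p with hwu_def
  set wv := εv - p with hwv_def
  have sum_p : ∑ a : Fin n, p a = 1 := by
    rw [hp]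
    simp only [PiLp.smul_apply, oneVec_apply, smul_eq_mul, mul_one, Finset.sum_const,
      Finset.card_univ, Fintype.card_fin, nsmul_eq_mul]
    field_simp
  have sum_single : ∀ x : Fin n, ∑ a : Fin n, (EuclideanSpace.single x (1:ℂ)) a = 1 := by
    intro x
    rw [Fintype.sum_eq_single x]
    · simp [EuclideanSpace.single_apply]
    · intro b hb; simp [EuclideanSpace.single_apply, hb]
  have hwu : ∑ a, wu a = 0 := by
    rw [hwu_def]
    simp only [PiLp.sub_apply, Finset.sum_sub_distrib, hεu, sum_single, sum_p, sub_self]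
  have hwv : ∑ a, wv a = 0 := by
    rw [hwv_def]
    simp only [PiLp.sub_apply, Finset.sum_sub_distrib, hεv, sum_single, sum_p, sub_self]
  have inner_p : ∀ x : EuclideanSpace ℂ (Fin n),
      (inner ℂ x p : ℂ) = (n:ℂ)⁻¹ * (starRingEnd ℂ) (∑ a, x a) := by
    intro x
    rw [hp, inner_smul_right, PiLp.inner_apply]
    simp only [RCLike.inner_apply, oneVec_apply, mul_one, one_mul, map_sum]
  -- decompose LHS
  have hEwu := exp_transfer G A hA hreg c wu hwu
  have lhs_eq : (inner ℂ (stdVec (Sum.inl v : ConeTailV n)) (T (stdVec (Sum.inl u : ConeTailV n))) : ℂ)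
      = (inner ℂ (Jmap n εv) (T (Jmap n p)) : ℂ) + (inner ℂ εv (E wu) : ℂ) := by
    rw [stdVec_inl u, stdVec_inl v, ← hεu, ← hεv]
    have : εu = p + wu := by rw [hwu_def]; abel
    rw [this, map_add, map_add, inner_add_right, hEwu, inner_J_J]
  -- decompose RHS (matrix side)
  have rhs_eq : (NormedSpace.exp (c • G.adjMatrix ℂ) v u : ℂ)
      = (inner ℂ εv (E p) : ℂ) + (inner ℂ εv (E wu) : ℂ) := by
    rw [exp_matrix_entry]
    have hsmul : Matrix.toEuclideanCLM (𝕜 := ℂ) (c • G.adjMatrix ℂ) = c • M := by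
      rw [hM, Mclm]
      exact _root_.map_smul (Matrix.toEuclideanCLM (𝕜 := ℂ)) c (G.adjMatrix ℂ)
    rw [hsmul, ← hE, ← hεu, ← hεv]
    have : εu = p + wu := by rw [hwu_def]; abel
    rw [this, map_add, inner_add_right]
  -- the v-side decomposition
  have hv_eq : (inner ℂ (Jmap n εv) (T (Jmap n p)) : ℂ)
      = (inner ℂ (Jmap n p) (T (Jmap n p)) : ℂ) + (inner ℂ (Jmap n wv) (T (Jmap n p)) : ℂ) := by
    have : εv = p + wv := by rw [hwv_def]; abel
    rw [this, map_add, inner_add_left]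
  -- adjoint of T
  have hadj : ContinuousLinearMap.adjoint T = NormedSpace.exp ((-c) • A) := by
    rw [← ContinuousLinearMap.star_eq_adjoint, hT, NormedSpace.star_exp, star_smul,
      hsa.star_eq, Complex.star_def, hconj]
  have hzero : (inner ℂ (Jmap n wv) (T (Jmap n p)) : ℂ) = 0 := by
    rw [← ContinuousLinearMap.adjoint_inner_left T (Jmap n p) (Jmap n wv), hadj,
      exp_transfer G A hA hreg (-c) wv hwv, inner_J_J, inner_p,
      sum_exp_zero G hreg (-c) wv hwv]
    simp
  -- bound term 1
  have hTT : star T * T = 1 := by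
    letI : NormedAlgebra ℚ (coneTailSpace n →L[ℂ] coneTailSpace n) := NormedAlgebra.restrictScalars ℚ ℂ _
    rw [hT, NormedSpace.star_exp, star_smul, hsa.star_eq, Complex.star_def, hconj,
      ← NormedSpace.exp_add_of_commute (((Commute.refl A).smul_left (-c)).smul_right c)]
    rw [← add_smul, neg_add_cancel, zero_smul, NormedSpace.exp_zero]
  have hTnorm : ∀ x : coneTailSpace n, ‖T x‖ = ‖x‖ := by
    intro x
    have hi : (inner ℂ (T x) (T x) : ℂ) = inner ℂ x x := by
      rw [← ContinuousLinearMap.adjoint_inner_left T x (T x),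
        ← ContinuousLinearMap.star_eq_adjoint]
      have : (star T) (T x) = (star T * T) x := rfl
      rw [this, hTT, ContinuousLinearMap.one_apply]
    have h2 : ‖T x‖ ^ 2 = ‖x‖ ^ 2 := by
      rw [← inner_self_eq_norm_sq (𝕜 := ℂ), ← inner_self_eq_norm_sq (𝕜 := ℂ), hi]
    have := congrArg Real.sqrt h2
    rwa [Real.sqrt_sq (norm_nonneg _), Real.sqrt_sq (norm_nonneg _)] at this
  have hJp_sq : ‖Jmap n p‖ ^ 2 = (n:ℝ)⁻¹ := by
    rw [← inner_self_eq_norm_sq (𝕜 := ℂ), inner_J_J, inner_p, sum_p]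
    have hcast : ((n:ℂ))⁻¹ = (((n:ℝ)⁻¹ : ℝ) : ℂ) := by push_cast; ring
    rw [_root_.map_one, mul_one, hcast]
    exact Complex.ofReal_re _
  have habs1 : ‖(inner ℂ (Jmap n p) (T (Jmap n p)) : ℂ)‖ ≤ (n:ℝ)⁻¹ := by
    have hcs := norm_inner_le_norm (𝕜 := ℂ) (Jmap n p) (T (Jmap n p))
    rw [hTnorm] at hcs
    have hmm : ‖Jmap n p‖ * ‖Jmap n p‖ = (n:ℝ)⁻¹ := by rw [← sq]; exact hJp_sq
    rw [hmm] at hcs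
    simpa using hcs
  have hEp : E p = Complex.exp (c * (d:ℂ)) • p := by
    rw [hp, E.map_smul, hE, hM, exp_smul_one G hreg c]
    exact smul_comm _ _ _
  have habs2 : ‖(inner ℂ εv (E p) : ℂ)‖ ≤ (n:ℝ)⁻¹ := by
    rw [hEp, inner_smul_right, inner_p, hεv, sum_single, _root_.map_one, mul_one]
    rw [norm_mul, Complex.norm_exp]
    have hre : (c * (d:ℂ)).re = 0 := by
      rw [hc]; simp [Complex.mul_re, Complex.mul_im]
    rw [hre, Real.exp_zero, one_mul]
    rw [norm_inv]
    simp
  rw [lhs_eq, rhs_eq, hv_eq, hzero, add_zero]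
  have hsimp : (inner ℂ (Jmap n p) (T (Jmap n p)) : ℂ) + (inner ℂ εv (E wu) : ℂ)
      - ((inner ℂ εv (E p) : ℂ) + (inner ℂ εv (E wu) : ℂ))
      = (inner ℂ (Jmap n p) (T (Jmap n p)) : ℂ) - (inner ℂ εv (E p) : ℂ) := by ring
  rw [hsimp]
  calc ‖(inner ℂ (Jmap n p) (T (Jmap n p)) : ℂ) - (inner ℂ εv (E p) : ℂ)‖
      ≤ ‖(inner ℂ (Jmap n p) (T (Jmap n p)) : ℂ)‖ + ‖(inner ℂ εv (E p) : ℂ)‖ :=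
        norm_sub_le _ _
    _ ≤ (n:ℝ)⁻¹ + (n:ℝ)⁻¹ := add_le_add habs1 habs2
    _ = 2 / (n:ℝ) := by rw [div_eq_mul_inv]; ring
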